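/- For every n ≥ 1, the antidiagonal sum f(n,1) + f(n+1,2) + f(n+2,3) + ⋯ (i.e., the sum over all d ≥ 1 of f(n-1+d, d)) equals p(n-1), the number of partitions of n-1. -/

import Mathlib

def cge (k : ℕ) (M : Multiset ℕ) : ℕ := (M.filter (k ≤ ·)).card

lemma key (k : ℕ) (hk : 1 ≤ k) : ∀ (l : List ℕ), l.Pairwise (· ≥ ·) → ∀ i : ℕ,
    (k ≤ l.getD i 0 ↔ i + 1 ≤ (l.filter (fun x => k ≤ x)).length) := by
  intro l
  induction l with
  | nil => intro _ i; simp; omega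
  | cons a l ih =>
    intro hs i
    rw [List.pairwise_cons] at hs
    obtain ⟨ha, hl⟩ := hs
    have hfn : ¬ (k ≤ a) → (l.filter (fun x => k ≤ x)) = [] := by
      intro h
      rw [List.filter_eq_nil_iff]
      intro b hb
      simp only [decide_eq_true_eq]
      have := ha b hb
      omega
    cases i with
    | zero =>
      by_cases h : k ≤ a
      · simp [List.getD_cons_zero, List.filter_cons, h]
      · simp [List.getD_cons_zero, List.filter_cons, h, hfn h]
    | succ i =>
      rw [List.getD_cons_succ]
      by_cases h : k ≤ a
      · rw [ih hl i]
        simp [List.filter_cons, h]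
      · have hL : ¬ (k ≤ l.getD i 0) := by
          rcases lt_or_ge i l.length with hi | hi
          · rw [List.getD_eq_getElem _ _ hi]
            have : l[i] ∈ l := List.getElem_mem hi
            have := ha _ this
            omega
          · rw [List.getD_eq_default _ _ hi]; omega
        have hnil : (a :: l).filter (fun x => k ≤ x) = [] := by
          rw [List.filter_cons]; simp [h, hfn h]
        rw [hnil]
        exact iff_of_false hL (by simp)

/-- The `d`-th largest part of a partition (1-indexed); `0` if the index is out of range. -/
def nthPart {n : ℕ} (p : n.Partition) (d : ℕ) : ℕ :=
  (p.parts.sort (· ≥ ·)).getD (d - 1) 0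

lemma le_nthPart_iff {n : ℕ} (p : n.Partition) {d k : ℕ} (hk : 1 ≤ k) (hd : 1 ≤ d) :
    k ≤ nthPart p d ↔ d ≤ cge k p.parts := by
  have hs : (p.parts.sort (· ≥ ·)).Pairwise (· ≥ ·) := p.parts.pairwise_sort _
  have := key k hk _ hs (d - 1)
  rw [nthPart, this]
  have hcge : cge k p.parts = ((p.parts.sort (· ≥ ·)).filter (fun x => k ≤ x)).length := by
    rw [cge]
    conv_lhs => rw [← Multiset.sort_eq p.parts (· ≥ ·), Multiset.filter_coe,
      Multiset.coe_card]
  rw [hcge]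
  omega

lemma nthPart_eq_iff {n : ℕ} (p : n.Partition) {d : ℕ} (hd : 1 ≤ d) :
    nthPart p d = d ↔ d ≤ cge d p.parts ∧ cge (d + 1) p.parts < d := by
  rw [← le_nthPart_iff p hd hd]
  have h2 := le_nthPart_iff p (k := d + 1) (by omega) hd
  constructor
  · intro h
    refine ⟨by omega, ?_⟩
    by_contra hc
    have : d + 1 ≤ nthPart p d := h2.mpr (by omega)
    omega
  · intro ⟨h1, h2'⟩
    have : ¬ (d + 1 ≤ nthPart p d) := fun hx => by have := h2.mp hx; omega
    omega

lemma cge_cons (k a : ℕ) (M : Multiset ℕ) :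
    cge k (a ::ₘ M) = cge k M + if k ≤ a then 1 else 0 := by
  rw [cge, cge, Multiset.filter_cons]
  split <;> simp [Multiset.card_add]

lemma cge_anti {k k' : ℕ} (h : k ≤ k') (M : Multiset ℕ) : cge k' M ≤ cge k M :=
  Multiset.card_le_card (Multiset.monotone_filter_right M (fun x hx => le_trans h hx))

lemma mem_of_nthPart {n : ℕ} (p : n.Partition) {d : ℕ} (hd : 1 ≤ d)
    (h : nthPart p d = d) : d ∈ p.parts := by
  rw [nthPart] at h
  set l := p.parts.sort (· ≥ ·) with hl
  rcases lt_or_ge (d - 1) l.length with hi | hi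
  · rw [List.getD_eq_getElem _ _ hi] at h
    have : l[d-1] ∈ l := List.getElem_mem hi
    rw [h] at this
    rwa [← Multiset.mem_sort (r := (· ≥ ·))]
  · rw [List.getD_eq_default _ _ hi] at h
    omega

lemma parts_le {m : ℕ} (μ : m.Partition) {x : ℕ} (hx : x ∈ μ.parts) : x ≤ m := by
  have := Multiset.single_le_sum (fun y _ => Nat.zero_le y) x hx
  rwa [μ.parts_sum] at this

lemma exD (m : ℕ) (μ : m.Partition) : ∃ d, 1 ≤ d ∧ cge (d + 1) μ.parts < d := by
  refine ⟨m + 1, by omega, ?_⟩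
  have : cge (m + 1 + 1) μ.parts = 0 := by
    rw [cge, Multiset.filter_eq_nil.mpr, Multiset.card_zero]
    intro x hx
    have := parts_le μ hx
    omega
  omega

def Dfun {m : ℕ} (μ : m.Partition) : ℕ := Nat.find (exD m μ)

lemma Dfun_spec {m : ℕ} (μ : m.Partition) :
    1 ≤ Dfun μ ∧ cge (Dfun μ + 1) μ.parts < Dfun μ := Nat.find_spec (exD m μ)

lemma Dfun_min {m : ℕ} (μ : m.Partition) {e : ℕ} (he : 1 ≤ e) (hlt : e < Dfun μ) :
    e ≤ cge (e + 1) μ.parts := by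
  have := Nat.find_min (exD m μ) hlt
  simp only [not_and, not_lt] at this
  exact this he

lemma Dfun_le {m : ℕ} (μ : m.Partition) : Dfun μ ≤ m + 1 := by
  apply Nat.find_le
  exact (by
    have : cge (m + 1 + 1) μ.parts = 0 := by
      rw [cge, Multiset.filter_eq_nil.mpr, Multiset.card_zero]
      intro x hx
      have := parts_le μ hx
      omega
    exact ⟨by omega, by omega⟩)

lemma cge_erase (k d : ℕ) (M : Multiset ℕ) (hmem : d ∈ M) :
    cge k M = cge k (M.erase d) + if k ≤ d then 1 else 0 := by
  conv_lhs => rw [← Multiset.cons_erase hmem, cge_cons]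

def toMu {m d : ℕ} (hd : 1 ≤ d) (p : (m + d).Partition) (h : nthPart p d = d) : m.Partition where
  parts := p.parts.erase d
  parts_pos := fun hx => p.parts_pos (Multiset.mem_of_mem_erase hx)
  parts_sum := by
    have hmem := mem_of_nthPart p hd h
    have := congrArg Multiset.sum (Multiset.cons_erase hmem)
    rw [Multiset.sum_cons, p.parts_sum] at this
    omega

lemma Dfun_toMu {m d : ℕ} (hd : 1 ≤ d) (p : (m + d).Partition) (h : nthPart p d = d) :
    Dfun (toMu hd p h) = d := by
  have hmem := mem_of_nthPart p hd h
  obtain ⟨h1, h2⟩ := (nthPart_eq_iff p hd).mp h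
  have he : (toMu hd p h).parts = p.parts.erase d := rfl
  rw [Dfun, Nat.find_eq_iff]
  refine ⟨⟨hd, ?_⟩, ?_⟩
  · rw [he]
    have := cge_erase (d + 1) d p.parts hmem
    rw [if_neg (by omega : ¬ d + 1 ≤ d)] at this
    omega
  · intro e hlt
    simp only [not_and, not_lt]
    intro he1
    rw [he]
    have hc := cge_erase (e + 1) d p.parts hmem
    rw [if_pos (by omega : e + 1 ≤ d)] at hc
    have := cge_anti (by omega : e + 1 ≤ d) p.parts
    omega

def toP {m d : ℕ} (hd : 1 ≤ d) (μ : m.Partition) : (m + d).Partition where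
  parts := d ::ₘ μ.parts
  parts_pos := fun hx => by
    rcases Multiset.mem_cons.mp hx with h | h
    · omega
    · exact μ.parts_pos h
  parts_sum := by rw [Multiset.sum_cons, μ.parts_sum]; omega

lemma nthPart_toP {m d : ℕ} (hd : 1 ≤ d) (μ : m.Partition) (hD : Dfun μ = d) :
    nthPart (toP hd μ) d = d := by
  have hp : (toP hd μ).parts = d ::ₘ μ.parts := rfl
  obtain ⟨h1, h2⟩ := Dfun_spec μ
  rw [hD] at h1 h2
  rw [nthPart_eq_iff _ hd, hp, cge_cons, cge_cons,
    if_pos (le_refl d), if_neg (by omega : ¬ d + 1 ≤ d)]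
  refine ⟨?_, by omega⟩
  rcases Nat.eq_or_lt_of_le hd with h | h
  · omega
  · have := Dfun_min μ (e := d - 1) (by omega) (by omega)
    have he : d - 1 + 1 = d := by omega
    rw [he] at this
    omega

def eqv (m d : ℕ) (hd : 1 ≤ d) :
    {p : (m + d).Partition // nthPart p d = d} ≃ {μ : m.Partition // Dfun μ = d} where
  toFun := fun x => ⟨toMu hd x.1 x.2, Dfun_toMu hd x.1 x.2⟩
  invFun := fun x => ⟨toP hd x.1, nthPart_toP hd x.1 x.2⟩
  left_inv := fun x => by
    apply Subtype.ext
    apply Nat.Partition.ext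
    show d ::ₘ (x.1.parts.erase d) = x.1.parts
    exact Multiset.cons_erase (mem_of_nthPart x.1 hd x.2)
  right_inv := fun x => by
    apply Subtype.ext
    apply Nat.Partition.ext
    show (d ::ₘ x.1.parts).erase d = x.1.parts
    exact Multiset.erase_cons_head d x.1.parts

/-- `f n d` is the number of partitions of `n` with fixed point `d`,
i.e. whose `d`-th largest part equals `d`. -/
noncomputable def f (n d : ℕ) : ℕ :=
  Nat.card {p : n.Partition // nthPart p d = d}
/-- `p n` is the number of partitions of `n` (with `p 0 = 1`). -/
noncomputable def numPartitions (n : ℕ) : ℕ := Nat.card (Nat.Partition n)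

/-- For `n ≥ 1`, the antidiagonal sum `∑_{d ≥ 1} f(n-1+d, d)` equals `p(n-1)`.
(The terms with `d > n` vanish, so the sum is truncated at `d = n`.) -/
theorem antidiagonal_sum_eq (n : ℕ) (hn : 1 ≤ n) :
    ∑ d ∈ Finset.Icc 1 n, f (n - 1 + d) d = numPartitions (n - 1) := by
  obtain ⟨m, rfl⟩ : ∃ m, n = m + 1 := ⟨n - 1, by omega⟩
  simp only [Nat.add_sub_cancel]
  have hf : ∀ d ∈ Finset.Icc 1 (m + 1), f (m + d) d =
      (Finset.univ.filter (fun μ : m.Partition => Dfun μ = d)).card := by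
    intro d hd
    rw [Finset.mem_Icc] at hd
    rw [f, Nat.card_eq_fintype_card, Fintype.card_congr (eqv m d hd.1),
      Fintype.card_subtype]
  rw [Finset.sum_congr rfl hf, numPartitions, Nat.card_eq_fintype_card,
    ← Finset.card_univ]
  exact (Finset.card_eq_sum_card_fiberwise (fun μ _ => by
    rw [Finset.mem_coe, Finset.mem_Icc]; exact ⟨(Dfun_spec μ).1, Dfun_le μ⟩)).symm
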